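/- LP bound for energy of codes: let h : {1,...,n} → (0,∞) and M ∈ {2,...,q^n}. If a real polynomial f(z) = Σ_{i=0}^n f_i K_i^{(n,q)}(z) satisfies f_0 > 0, f_i ≥ 0 for i = 1,...,n, f(0) > 0, and f(i) ≤ h(i) for i = 1,...,n, then every code C ⊆ F_q^n with |C| = M has potential energy E_h(C) = Σ_{x≠y ∈ C} h(d(x,y)) ≥ M(f_0 M - f(0)). -/

import Mathlib

open Finset

/-- Generalized binomial coefficient `C(z, j) = z(z-1)⋯(z-j+1)/j!` for real `z`. -/
noncomputable def realChoose (z : ℝ) (j : ℕ) : ℝ :=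
  (∏ k ∈ Finset.range j, (z - k)) / (Nat.factorial j)

/-- The Krawtchouk polynomial `K_i^{(n,q)}(z)`. -/
noncomputable def kraw (n q i : ℕ) (z : ℝ) : ℝ :=
  ∑ j ∈ Finset.range (i + 1),
    (-1 : ℝ) ^ j * ((q : ℝ) - 1) ^ (i - j) * (q : ℝ) ^ j *
      ((n - j).choose (n - i) : ℝ) * realChoose z j

/-- The distance distribution `B_i` of a code `C ⊆ F_q^n`. -/
noncomputable def distDistrib {n q : ℕ} (C : Finset (Fin n → Fin q)) (i : ℕ) : ℝ :=
  (((C ×ˢ C).filter (fun p => hammingDist p.1 p.2 = i)).card : ℝ) / (C.card : ℝ)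

/-- The dual distance distribution (MacWilliams transform) `B'_i` of a code. -/
noncomputable def dualDistDistrib {n q : ℕ} (C : Finset (Fin n → Fin q)) (i : ℕ) : ℝ :=
  (∑ j ∈ Finset.range (n + 1), distDistrib C j * kraw n q i j) / (C.card : ℝ)


lemma realChoose_natCast (d j : ℕ) : realChoose (d : ℝ) j = (d.choose j : ℝ) := by
  unfold realChoose
  by_cases hj : j ≤ d
  · have hprod : (∏ k ∈ Finset.range j, ((d : ℝ) - k)) = (d.descFactorial j : ℝ) := by
      rw [Nat.descFactorial_eq_prod_range]
      push_cast
      refine Finset.prod_congr rfl fun k hk => ?_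
      rw [Nat.cast_sub (le_of_lt (lt_of_lt_of_le (Finset.mem_range.1 hk) hj))]
    rw [hprod, Nat.descFactorial_eq_factorial_mul_choose]
    push_cast
    field_simp
  · push_neg at hj
    rw [Nat.choose_eq_zero_of_lt hj]
    rw [Finset.prod_eq_zero (Finset.mem_range.2 hj) (by simp), zero_div]
    simp


lemma count_supersets {n : ℕ} (i : ℕ) (A : Finset (Fin n)) (hA : A.card ≤ i) :
    ((powersetCard i (univ : Finset (Fin n))).filter (fun S => A ⊆ S)).card
      = (n - A.card).choose (i - A.card) := by
  have hc : ((univ : Finset (Fin n)) \ A).card = n - A.card := by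
    rw [card_sdiff_of_subset (subset_univ A), card_univ, Fintype.card_fin]
  rw [← hc, ← Finset.card_powersetCard (i - A.card) (univ \ A)]
  apply Finset.card_nbij' (fun S => S \ A) (fun T => T ∪ A)
  · intro S hS
    simp only [mem_coe, mem_filter, mem_powersetCard] at hS
    obtain ⟨⟨_, hcard⟩, hsub⟩ := hS
    rw [mem_coe, mem_powersetCard]
    constructor
    · exact sdiff_subset_sdiff (subset_univ _) Subset.rfl
    · rw [card_sdiff_of_subset hsub, hcard]
  · intro T hT
    rw [mem_coe, mem_powersetCard] at hT
    obtain ⟨hsub, hcard⟩ := hT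
    have hdisj : Disjoint T A := by
      exact disjoint_of_subset_left hsub (sdiff_disjoint)
    simp only [mem_coe, mem_filter, mem_powersetCard]
    refine ⟨⟨subset_univ _, ?_⟩, subset_union_right⟩
    rw [card_union_of_disjoint hdisj, hcard]
    have : A.card ≤ n := by
      simpa using card_le_card (subset_univ A)
    omega
  · intro S hS
    simp only [mem_coe, mem_filter, mem_powersetCard] at hS
    exact sdiff_union_of_subset hS.2
  · intro T hT
    rw [mem_coe, mem_powersetCard] at hT
    have hdisj : Disjoint T A := disjoint_of_subset_left hT.1 (sdiff_disjoint)
    show (T ∪ A) \ A = T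
    rw [union_sdiff_right, sdiff_eq_self_of_disjoint hdisj]

lemma count_supersets_zero {n : ℕ} (i : ℕ) (A : Finset (Fin n)) (hA : i < A.card) :
    ((powersetCard i (univ : Finset (Fin n))).filter (fun S => A ⊆ S)).card = 0 := by
  rw [card_eq_zero, filter_eq_empty_iff]
  intro S hS
  rw [mem_powersetCard] at hS
  intro hsub
  have := card_le_card hsub
  omega


variable {A M : Type*} [AddCommMonoid A] [CommMonoid M]

lemma addChar_map_sum (ψ : AddChar A M) {ι : Type*} (s : Finset ι) (g : ι → A) :
    ψ (∑ k ∈ s, g k) = ∏ k ∈ s, ψ (g k) := by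
  classical
  induction s using Finset.cons_induction with
  | empty => simp
  | cons a s ha ih => rw [sum_cons, prod_cons, AddChar.map_add_eq_mul, ih]

lemma inner_factor (n q : ℕ) [NeZero q] (S : Finset (Fin n)) (c : Fin n → ZMod q) :
    ∑ u ∈ Fintype.piFinset
        (fun k => if k ∈ S then (univ.erase (0 : ZMod q)) else {0}),
      ZMod.stdAddChar (∑ k, u k * c k)
    = ∏ k ∈ S, (if c k = 0 then ((q : ℂ) - 1) else -1) := by
  classical
  rw [Finset.sum_congr rfl (fun u _ => addChar_map_sum ZMod.stdAddChar univ (fun k => u k * c k)),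
    ← Finset.prod_univ_sum (fun k => if k ∈ S then (univ.erase (0 : ZMod q)) else {0})
      (fun k a => ZMod.stdAddChar (a * c k))]
  rw [← Finset.prod_subset (Finset.subset_univ S) (fun k _ hk => ?_)]
  · refine Finset.prod_congr rfl fun k hk => ?_
    rw [if_pos hk]
    by_cases hc : c k = 0
    · rw [if_pos hc]
      have : ∀ a ∈ (univ.erase (0 : ZMod q)), ZMod.stdAddChar (a * c k) = 1 := by
        intro a _; rw [hc, mul_zero, AddChar.map_zero_eq_one]
      rw [Finset.sum_congr rfl this, Finset.sum_const, Finset.card_erase_of_mem (mem_univ _),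
        card_univ, ZMod.card]
      have hq1 : 1 ≤ q := Nat.one_le_iff_ne_zero.2 (NeZero.ne q)
      simp [Nat.cast_sub hq1]
    · rw [if_neg hc]
      have hfull : ∑ a : ZMod q, ZMod.stdAddChar (a * c k) = 0 := by
        have hne : AddChar.mulShift ZMod.stdAddChar (c k) ≠ 1 :=
          ZMod.isPrimitive_stdAddChar q hc
        have := AddChar.sum_eq_zero_of_ne_one hne
        simpa [AddChar.mulShift_apply, mul_comm] using this
      have := Finset.add_sum_erase univ (fun a => ZMod.stdAddChar (a * c k)) (mem_univ 0)
      rw [hfull] at this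
      simp only [zero_mul, AddChar.map_zero_eq_one] at this
      linear_combination this
  · rw [if_neg hk]
    rw [Finset.sum_singleton]
    simp


noncomputable def kform (n q i d : ℕ) : ℂ :=
  ∑ j ∈ Finset.range (n + 1),
    (-1 : ℂ) ^ j * ((q : ℂ) - 1) ^ (i - j) * (q : ℂ) ^ j *
      ((n - j).choose (n - i) : ℂ) * (d.choose j : ℂ)

lemma kraw_natCast (n q i d : ℕ) (hi : i ≤ n) :
    ((kraw n q i d : ℝ) : ℂ) = kform n q i d := by
  unfold kraw kform
  rw [← Finset.sum_subset (Finset.range_subset_range.2 (by omega : i + 1 ≤ n + 1))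
    (fun j hj hj' => ?_)]
  · push_cast
    refine Finset.sum_congr rfl fun j _ => ?_
    rw [realChoose_natCast]
    push_cast
    ring
  · rw [Finset.mem_range] at hj hj'
    have : (n - j).choose (n - i) = 0 := Nat.choose_eq_zero_of_lt (by omega)
    rw [this]
    simp

lemma count_eq {n : ℕ} (i : ℕ) (hi : i ≤ n) (A : Finset (Fin n)) :
    ((powersetCard i (univ : Finset (Fin n))).filter (fun S => A ⊆ S)).card
      = (n - A.card).choose (n - i) := by
  by_cases hA : A.card ≤ i
  · rw [count_supersets i A hA]
    have hAn : A.card ≤ n := le_trans hA hi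
    rw [← Nat.choose_symm (by omega : i - A.card ≤ n - A.card)]
    congr 1
    omega
  · push_neg at hA
    rw [count_supersets_zero i A hA]
    have hAn : A.card ≤ n := by simpa using card_le_card (subset_univ A)
    exact (Nat.choose_eq_zero_of_lt (by omega)).symm

lemma esymm_eval (n q i : ℕ) (hi : i ≤ n) (D : Finset (Fin n)) :
    ∑ S ∈ powersetCard i (univ : Finset (Fin n)),
        ∏ k ∈ S, (if k ∈ D then (-1 : ℂ) else ((q : ℂ) - 1))
      = kform n q i D.card := by
  classical
  have hDn : D.card ≤ n := by simpa using card_le_card (subset_univ D)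
  set Y : Finset (Fin n) → ℂ :=
    fun A => if A ⊆ D then (-(q : ℂ)) ^ A.card * ((q : ℂ) - 1) ^ (i - A.card) else 0 with hY
  have step1 : ∀ S ∈ powersetCard i (univ : Finset (Fin n)),
      (∏ k ∈ S, (if k ∈ D then (-1 : ℂ) else ((q : ℂ) - 1)))
        = ∑ A ∈ (univ : Finset (Fin n)).powerset, (if A ⊆ S then Y A else 0) := by
    intro S hS
    rw [mem_powersetCard] at hS
    have hcard := hS.2
    have hps : ((univ : Finset (Fin n)).powerset.filter (fun A => A ⊆ S)) = S.powerset := by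
      ext A; simp [mem_powerset]
    rw [← Finset.sum_filter, hps]
    have expand : (∏ k ∈ S, (if k ∈ D then (-1 : ℂ) else ((q : ℂ) - 1)))
        = ∏ k ∈ S, ((if k ∈ D then (-(q : ℂ)) else 0) + ((q : ℂ) - 1)) := by
      refine Finset.prod_congr rfl fun k _ => ?_
      by_cases hk : k ∈ D <;> simp [hk] <;> ring
    rw [expand, Finset.prod_add]
    refine Finset.sum_congr rfl fun A hA => ?_
    rw [mem_powerset] at hA
    simp only [hY]
    by_cases hAD : A ⊆ D
    · rw [if_pos hAD]
      have h1 : (∏ k ∈ A, (if k ∈ D then (-(q : ℂ)) else 0)) = (-(q : ℂ)) ^ A.card := by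
        rw [Finset.prod_congr rfl (fun k hk => if_pos (hAD hk)), Finset.prod_const]
      have h2 : (∏ _k ∈ S \ A, ((q : ℂ) - 1)) = ((q : ℂ) - 1) ^ (i - A.card) := by
        rw [Finset.prod_const, card_sdiff_of_subset hA, hcard]
      rw [h1, h2]
    · rw [if_neg hAD]
      obtain ⟨k, hkA, hkD⟩ := not_subset.1 hAD
      rw [Finset.prod_eq_zero hkA (by rw [if_neg hkD]), zero_mul]
  rw [Finset.sum_congr rfl step1, Finset.sum_comm]
  have inner : ∀ A ∈ (univ : Finset (Fin n)).powerset,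
      (∑ S ∈ powersetCard i (univ : Finset (Fin n)), (if A ⊆ S then Y A else 0))
        = (((n - A.card).choose (n - i) : ℕ) : ℂ) * Y A := by
    intro A _
    rw [← Finset.sum_filter, Finset.sum_const, nsmul_eq_mul, count_eq i hi A]
  rw [Finset.sum_congr rfl inner]
  rw [← Finset.sum_subset (Finset.powerset_mono.2 (subset_univ D)) (fun A _ hAD => ?_)]
  · have step3 : ∀ A ∈ D.powerset,
        (((n - A.card).choose (n - i) : ℕ) : ℂ) * Y A
          = (fun m => (((n - m).choose (n - i) : ℕ) : ℂ) * ((-(q : ℂ)) ^ m * ((q : ℂ) - 1) ^ (i - m))) A.card := by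
      intro A hA
      rw [mem_powerset] at hA
      simp only [hY, if_pos hA]
    rw [Finset.sum_congr rfl step3]
    rw [Finset.sum_powerset_apply_card
      (fun m => (((n - m).choose (n - i) : ℕ) : ℂ) * ((-(q : ℂ)) ^ m * ((q : ℂ) - 1) ^ (i - m)))]
    unfold kform
    rw [← Finset.sum_subset (Finset.range_subset_range.2 (by omega : D.card + 1 ≤ n + 1))
      (fun j hj hj' => ?_)]
    · refine Finset.sum_congr rfl fun j _ => ?_
      rw [nsmul_eq_mul]
      push_cast
      ring
    · rw [Finset.mem_range] at hj hj'
      rw [Nat.choose_eq_zero_of_lt (by omega : D.card < j)]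
      simp
  · rw [mem_powerset] at hAD
    simp only [hY]
    simp only [if_neg hAD, mul_zero]


lemma kraw_hamming (n q i : ℕ) [NeZero q] (hi : i ≤ n) (x y : Fin n → ZMod q) :
    ((kraw n q i (hammingDist x y) : ℝ) : ℂ)
      = ∑ S ∈ powersetCard i (univ : Finset (Fin n)),
          ∑ u ∈ Fintype.piFinset
              (fun k => if k ∈ S then (univ.erase (0 : ZMod q)) else {0}),
            ZMod.stdAddChar (∑ k, u k * (x k - y k)) := by
  classical
  set D : Finset (Fin n) := univ.filter (fun k => x k - y k ≠ 0) with hD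
  have hdist : hammingDist x y = D.card := by
    unfold hammingDist
    congr 1
    apply Finset.filter_congr
    intro k _
    simp [sub_ne_zero]
  rw [hdist, kraw_natCast n q i D.card hi, ← esymm_eval n q i hi D]
  refine Finset.sum_congr rfl fun S _ => ?_
  rw [inner_factor n q S (fun k => x k - y k)]
  refine Finset.prod_congr rfl fun k _ => ?_
  by_cases hk : x k - y k = 0
  · rw [if_pos hk, if_neg (by simp [hD, hk])]
  · rw [if_neg hk, if_pos (by simp [hD, hk])]

lemma star_stdAddChar {q : ℕ} [NeZero q] (a : ZMod q) :
    (starRingEnd ℂ) (ZMod.stdAddChar a) = ZMod.stdAddChar (-a) := by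
  rw [ZMod.stdAddChar_apply, ZMod.stdAddChar_apply, AddChar.map_neg_eq_inv,
    Circle.coe_inv_eq_conj]

lemma sum_kraw_nonneg (n q i : ℕ) (hq : 2 ≤ q) (hi : i ≤ n)
    (C : Finset (Fin n → Fin q)) :
    0 ≤ ∑ p ∈ C ×ˢ C, kraw n q i (hammingDist p.1 p.2) := by
  classical
  haveI : NeZero q := ⟨by omega⟩
  set φ : (Fin n → Fin q) → (Fin n → ZMod q) := fun x k => ((x k : ℕ) : ZMod q) with hφ
  have hdist : ∀ x y : Fin n → Fin q, hammingDist x y = hammingDist (φ x) (φ y) := by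
    intro x y
    unfold hammingDist
    congr 1
    apply Finset.filter_congr
    intro k _
    simp only [hφ, ne_eq]
    constructor
    · intro hxy hc
      apply hxy
      have := congrArg ZMod.val hc
      rwa [ZMod.val_cast_of_lt (x k).isLt, ZMod.val_cast_of_lt (y k).isLt,
        Fin.val_eq_val] at this
    · intro hxy hc
      exact hxy (by rw [hc])
  set pc := powersetCard i (univ : Finset (Fin n)) with hpc
  set piF : Finset (Fin n) → Finset (Fin n → ZMod q) :=
    fun S => Fintype.piFinset (fun k => if k ∈ S then (univ.erase (0 : ZMod q)) else {0})
    with hpiF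
  set z : Finset (Fin n) → (Fin n → ZMod q) → ℂ :=
    fun S u => ∑ x ∈ C, ZMod.stdAddChar (∑ k, u k * φ x k) with hz
  have key : ((∑ p ∈ C ×ˢ C, kraw n q i (hammingDist p.1 p.2) : ℝ) : ℂ)
      = ∑ S ∈ pc, ∑ u ∈ piF S, ((Complex.normSq (z S u) : ℝ) : ℂ) := by
    rw [Complex.ofReal_sum]
    have e1 : ∀ p ∈ C ×ˢ C, ((kraw n q i (hammingDist p.1 p.2) : ℝ) : ℂ)
        = ∑ S ∈ pc, ∑ u ∈ piF S, ZMod.stdAddChar (∑ k, u k * (φ p.1 k - φ p.2 k)) := by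
      intro p _
      rw [hdist p.1 p.2]
      exact kraw_hamming n q i hi (φ p.1) (φ p.2)
    rw [Finset.sum_congr rfl e1, Finset.sum_comm]
    refine Finset.sum_congr rfl fun S _ => ?_
    rw [Finset.sum_comm]
    refine Finset.sum_congr rfl fun u _ => ?_
    have e2 : ∀ p : (Fin n → Fin q) × (Fin n → Fin q),
        ZMod.stdAddChar (∑ k, u k * (φ p.1 k - φ p.2 k))
          = ZMod.stdAddChar (∑ k, u k * φ p.1 k)
            * (starRingEnd ℂ) (ZMod.stdAddChar (∑ k, u k * φ p.2 k)) := by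
      intro p
      rw [star_stdAddChar, ← AddChar.map_add_eq_mul]
      congr 1
      rw [← Finset.sum_neg_distrib, ← Finset.sum_add_distrib]
      refine Finset.sum_congr rfl fun k _ => ?_
      ring
    calc ∑ p ∈ C ×ˢ C, ZMod.stdAddChar (∑ k, u k * (φ p.1 k - φ p.2 k))
        = ∑ x ∈ C, ∑ y ∈ C, (ZMod.stdAddChar (∑ k, u k * φ x k)
            * (starRingEnd ℂ) (ZMod.stdAddChar (∑ k, u k * φ y k))) := by
          rw [Finset.sum_product]
          exact Finset.sum_congr rfl fun x _ => Finset.sum_congr rfl fun y _ => e2 (x, y)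
      _ = z S u * (starRingEnd ℂ) (z S u) := by
          rw [← Finset.sum_mul_sum, hz]
          simp only []
          rw [map_sum]
      _ = ((Complex.normSq (z S u) : ℝ) : ℂ) := Complex.mul_conj _
  have key2 : (∑ p ∈ C ×ˢ C, kraw n q i (hammingDist p.1 p.2))
      = ∑ S ∈ pc, ∑ u ∈ piF S, Complex.normSq (z S u) := by
    have := key
    rw [← Complex.ofReal_inj]
    convert this using 1
    push_cast
    rfl
  rw [key2]
  refine Finset.sum_nonneg fun S _ => Finset.sum_nonneg fun u _ => Complex.normSq_nonneg _

lemma kraw_zero_eq_one (n q : ℕ) (z : ℝ) : kraw n q 0 z = 1 := by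
  simp [kraw, realChoose]


theorem LP_energy_bound_codes (n q M : ℕ) (hn : 1 ≤ n) (hq : 2 ≤ q)
    (hM2 : 2 ≤ M) (hMq : M ≤ q ^ n)
    (h : ℕ → ℝ) (hpos : ∀ i : ℕ, 1 ≤ i → i ≤ n → 0 < h i)
    (f : ℝ → ℝ) (c : ℕ → ℝ)
    (hf : ∀ z : ℝ, f z = ∑ i ∈ Finset.range (n + 1), c i * kraw n q i z)
    (hD1a : 0 < c 0) (hD1b : ∀ i : ℕ, 1 ≤ i → i ≤ n → 0 ≤ c i)
    (hD2a : 0 < f 0) (hD2b : ∀ i : ℕ, 1 ≤ i → i ≤ n → f i ≤ h i)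
    (C : Finset (Fin n → Fin q)) (hCM : C.card = M) :
    (M : ℝ) * (c 0 * M - f 0) ≤
      ∑ p ∈ (C ×ˢ C).filter (fun p => p.1 ≠ p.2), h (hammingDist p.1 p.2) := by
  classical
  -- Step 1: lower bound h by f on the off-diagonal pairs
  have step1 : ∑ p ∈ (C ×ˢ C).filter (fun p => p.1 ≠ p.2), f (hammingDist p.1 p.2)
      ≤ ∑ p ∈ (C ×ˢ C).filter (fun p => p.1 ≠ p.2), h (hammingDist p.1 p.2) := by
    refine Finset.sum_le_sum fun p hp => ?_
    rw [Finset.mem_filter] at hp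
    have hd1 : 1 ≤ hammingDist p.1 p.2 := hammingDist_pos.2 hp.2
    have hd2 : hammingDist p.1 p.2 ≤ n := by
      simpa using (hammingDist_le_card_fintype (x := p.1) (y := p.2))
    exact hD2b _ hd1 hd2
  -- Step 2: the diagonal sum
  have diag : (C ×ˢ C).filter (fun p => p.1 = p.2) = C.image (fun x => (x, x)) := by
    ext ⟨a, b⟩
    simp only [Finset.mem_filter, Finset.mem_product, Finset.mem_image, Prod.mk.injEq]
    constructor
    · rintro ⟨⟨ha, _⟩, hab⟩
      exact ⟨a, ha, rfl, hab⟩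
    · rintro ⟨x, hx, rfl, rfl⟩
      exact ⟨⟨hx, hx⟩, rfl⟩
  have diag_sum : ∑ p ∈ (C ×ˢ C).filter (fun p => p.1 = p.2), f (hammingDist p.1 p.2)
      = (M : ℝ) * f 0 := by
    rw [diag, Finset.sum_image (fun x _ y _ hxy => (Prod.mk.injEq _ _ _ _ ▸ hxy).1)]
    have : ∀ x ∈ C, f (hammingDist x x) = f 0 := by
      intro x _
      rw [hammingDist_self, Nat.cast_zero]
    rw [Finset.sum_congr rfl this, Finset.sum_const, hCM, nsmul_eq_mul]
  -- Step 3: split the full sum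
  have split : ∑ p ∈ C ×ˢ C, f (hammingDist p.1 p.2)
      = (M : ℝ) * f 0
        + ∑ p ∈ (C ×ˢ C).filter (fun p => p.1 ≠ p.2), f (hammingDist p.1 p.2) := by
    rw [← diag_sum, ← Finset.sum_filter_add_sum_filter_not (C ×ˢ C) (fun p => p.1 = p.2)]
  -- Step 4: LP bound on the full sum
  have full : (M : ℝ) * M * c 0 ≤ ∑ p ∈ C ×ˢ C, f (hammingDist p.1 p.2) := by
    have expand : ∑ p ∈ C ×ˢ C, f (hammingDist p.1 p.2)
        = ∑ i ∈ Finset.range (n + 1),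
            c i * ∑ p ∈ C ×ˢ C, kraw n q i (hammingDist p.1 p.2) := by
      rw [Finset.sum_congr rfl (fun p _ => hf (hammingDist p.1 p.2)), Finset.sum_comm]
      exact Finset.sum_congr rfl fun i _ => (Finset.mul_sum _ _ _).symm
    rw [expand, Finset.sum_range_succ']
    have T0 : ∑ p ∈ C ×ˢ C, kraw n q 0 (hammingDist p.1 p.2) = (M : ℝ) * M := by
      rw [Finset.sum_congr rfl (fun p _ => kraw_zero_eq_one n q _), Finset.sum_const,
        Finset.card_product, hCM, nsmul_eq_mul]
      push_cast
      ring
    rw [T0]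
    have tail : 0 ≤ ∑ i ∈ Finset.range n,
        c (i + 1) * ∑ p ∈ C ×ˢ C, kraw n q (i + 1) (hammingDist p.1 p.2) := by
      refine Finset.sum_nonneg fun i hi => ?_
      rw [Finset.mem_range] at hi
      exact mul_nonneg (hD1b (i + 1) (by omega) (by omega))
        (sum_kraw_nonneg n q (i + 1) hq (by omega) C)
    nlinarith [tail]
  nlinarith [step1, split, full]
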